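/- arXiv:0905.0795 — 2 statements merged into one kernel-verified Lean document; each statement's English description precedes it below -/
import Mathlib

section
/- Let Ψ(z) = Σ_{k≥0} Ψ_k z^k satisfy Ψ(z)Ψ(−z)^t = Id, let r ∈ Mat_n(ℂ), l ≥ 1, and define the tangent action (rζ^l).Ψ_k = Ψ_{l+k} r − Σ_{p=1}^{l} Σ_{q=0}^{l−p} (−1)^{l−p−q} Ψ_q r Ψ_{l−p−q}^t Ψ_{p+k}. Then −((rζ^l).Ψ_3)Ψ_0^t + ((rζ^l).Ψ_2)Ψ_1^t − ((rζ^l).Ψ_1)Ψ_2^t + ((rζ^l).Ψ_0)Ψ_3^t = − Σ_{i=0}^{l+3} (−1)^i Ψ_{l+3−i} r Ψ_i^t. -/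
open Matrix PowerSeries Finset

/-- The tangent action of `r ζ^l ∈ g₊` on the coefficients of the KP wave function:
`(rζ^l).Ψ_k = Ψ_{l+k} r - ∑_{p=1}^{l} ∑_{q=0}^{l-p} (-1)^{l-p-q} Ψ_q r Ψ_{l-p-q}ᵗ Ψ_{p+k}`. -/
noncomputable def rAction {n : ℕ} (Ψ : ℕ → Matrix (Fin n) (Fin n) ℂ)
    (r : Matrix (Fin n) (Fin n) ℂ) (l k : ℕ) : Matrix (Fin n) (Fin n) ℂ :=
  Ψ (l + k) * r -
    ∑ p ∈ Finset.Icc 1 l, ∑ q ∈ Finset.range (l - p + 1),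
      ((-1 : ℂ) ^ (l - p - q)) • (Ψ q * r * (Ψ (l - p - q))ᵀ * Ψ (p + k))

/-- `Ψ(-z)ᵀ Ψ(z) = 1` follows from `Ψ(z)Ψ(-z)ᵀ = 1` by passing to matrices over power
series, where left inverses are right inverses. -/
lemma aux_BA {n : ℕ} (Ψ : ℕ → Matrix (Fin n) (Fin n) ℂ)
    (h : (PowerSeries.mk Ψ) *
        (PowerSeries.mk fun k => ((-1 : ℂ) ^ k) • (Ψ k)ᵀ) = 1) :
    (PowerSeries.mk fun k => ((-1 : ℂ) ^ k) • (Ψ k)ᵀ) * (PowerSeries.mk Ψ) = 1 := by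
  classical
  set M : Matrix (Fin n) (Fin n) (PowerSeries ℂ) :=
    Matrix.of fun i j => PowerSeries.mk fun k => Ψ k i j with hM
  set N : Matrix (Fin n) (Fin n) (PowerSeries ℂ) :=
    Matrix.of fun i j => PowerSeries.mk fun k => ((-1 : ℂ) ^ k) * Ψ k j i with hN
  have hMN : M * N = 1 := by
    ext i j k
    have h1 := congrArg (fun φ => (PowerSeries.coeff k φ) i j) h
    simp only [PowerSeries.coeff_mul, PowerSeries.coeff_mk, map_sum,
      Matrix.sum_apply, Matrix.mul_apply, Matrix.smul_apply, smul_eq_mul,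
      Matrix.transpose_apply] at h1
    simp only [hM, hN, Matrix.mul_apply, map_sum, PowerSeries.coeff_mul,
      PowerSeries.coeff_mk, Matrix.of_apply, Matrix.one_apply]
    rw [Finset.sum_comm, h1]
    by_cases hij : i = j <;> simp [hij, PowerSeries.coeff_one] <;>
      split_ifs <;> simp [Matrix.one_apply, hij]
  have hNM : N * M = 1 := mul_eq_one_comm.mp hMN
  apply PowerSeries.ext
  intro k
  apply Matrix.ext
  intro i j
  have h2 := congrArg (fun m => PowerSeries.coeff k (m i j)) hNM
  simp only [Matrix.mul_apply, map_sum, PowerSeries.coeff_mul, hM, hN,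
    Matrix.of_apply, PowerSeries.coeff_mk, Matrix.one_apply] at h2
  simp only [PowerSeries.coeff_mul, PowerSeries.coeff_mk, PowerSeries.coeff_one,
    Matrix.sum_apply, Matrix.mul_apply, Matrix.smul_apply, smul_eq_mul, Matrix.transpose_apply]
  rw [Finset.sum_comm, h2]
  by_cases hij : i = j <;> simp [hij, PowerSeries.coeff_one] <;>
    split_ifs <;> simp [Matrix.one_apply, hij]


set_option maxHeartbeats 1000000 in
/-- Let `Ψ(z) = ∑_{k≥0} Ψ_k z^k` satisfy `Ψ(z)Ψ(-z)ᵗ = Id`, let `r ∈ Matₙ(ℂ)` and `l ≥ 1`.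
Then
`-((rζ^l).Ψ₃)Ψ₀ᵗ + ((rζ^l).Ψ₂)Ψ₁ᵗ - ((rζ^l).Ψ₁)Ψ₂ᵗ + ((rζ^l).Ψ₀)Ψ₃ᵗ
  = -∑_{i=0}^{l+3} (-1)^i Ψ_{l+3-i} r Ψ_iᵗ`. -/
theorem gplus_action_identity (n : ℕ) (Ψ : ℕ → Matrix (Fin n) (Fin n) ℂ)
    (h : (PowerSeries.mk Ψ) *
        (PowerSeries.mk fun k => ((-1 : ℂ) ^ k) • (Ψ k)ᵀ) = 1)
    (r : Matrix (Fin n) (Fin n) ℂ) (l : ℕ) (hl : 1 ≤ l) :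
    -(rAction Ψ r l 3 * (Ψ 0)ᵀ) + rAction Ψ r l 2 * (Ψ 1)ᵀ
        - rAction Ψ r l 1 * (Ψ 2)ᵀ + rAction Ψ r l 0 * (Ψ 3)ᵀ =
      -∑ i ∈ Finset.range (l + 4), ((-1 : ℂ) ^ i) • (Ψ (l + 3 - i) * r * (Ψ i)ᵀ) := by
  classical
  have hBA := aux_BA Ψ h
  set A : PowerSeries (Matrix (Fin n) (Fin n) ℂ) := PowerSeries.mk Ψ with hA
  set B : PowerSeries (Matrix (Fin n) (Fin n) ℂ) :=
    PowerSeries.mk (fun k => ((-1 : ℂ) ^ k) • (Ψ k)ᵀ) with hBdef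
  set E : ℕ → Matrix (Fin n) (Fin n) ℂ :=
    fun u => PowerSeries.coeff u (A * PowerSeries.C r * B) with hEdef
  -- coefficients of A * C r * B
  have hE : ∀ u, E u
      = ∑ q ∈ Finset.range (u + 1), ((-1 : ℂ) ^ (u - q)) • (Ψ q * r * (Ψ (u - q))ᵀ) := by
    intro u
    simp only [hEdef]
    rw [PowerSeries.coeff_mul, Finset.Nat.sum_antidiagonal_eq_sum_range_succ_mk]
    refine Finset.sum_congr rfl fun q hq => ?_
    simp only [hA, hBdef, PowerSeries.coeff_mul_C, PowerSeries.coeff_mk, mul_smul_comm]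
  -- key convolution identity coming from B * A = 1
  have hK : ∀ L, ∑ k ∈ Finset.range (L + 1), E k * Ψ (L - k) = Ψ L * r := by
    intro L
    have h1 : (A * PowerSeries.C r * B) * A = A * PowerSeries.C r := by
      rw [mul_assoc, hBA, mul_one]
    have h2 := congrArg (PowerSeries.coeff L) h1
    rw [PowerSeries.coeff_mul, Finset.Nat.sum_antidiagonal_eq_sum_range_succ_mk,
      PowerSeries.coeff_mul_C] at h2
    simp only [hA, PowerSeries.coeff_mk] at h2
    simp only [hEdef]
    exact h2
  -- rewriting rAction
  have hAct : ∀ k, rAction Ψ r l k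
      = Ψ (l + k) * r - ∑ p ∈ Finset.Icc 1 l, E (l - p) * Ψ (p + k) := by
    intro k
    rw [rAction]
    congr 1
    refine Finset.sum_congr rfl fun p hp => ?_
    rw [hE (l - p), Finset.sum_mul]
    refine Finset.sum_congr rfl fun q hq => ?_
    rw [smul_mul_assoc]
  -- the truncated orthogonality sums
  have hBp : ∀ p, 1 ≤ p →
      ∑ m ∈ Finset.range 4, ((-1 : ℂ) ^ m) • (Ψ (p + m) * (Ψ (3 - m))ᵀ)
        = ∑ j ∈ Finset.Ico 4 (p + 4), ((-1 : ℂ) ^ j) • (Ψ (p + 3 - j) * (Ψ j)ᵀ) := by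
    intro p hp
    have h0 := congrArg (PowerSeries.coeff (p + 3)) h
    rw [PowerSeries.coeff_mul, Finset.Nat.sum_antidiagonal_eq_sum_range_succ_mk] at h0
    simp only [hA, hBdef, PowerSeries.coeff_mk, PowerSeries.coeff_one] at h0
    rw [if_neg (by omega)] at h0
    have hsplit : ∑ i ∈ Finset.range (p + 4), Ψ i * (((-1 : ℂ) ^ (p + 3 - i)) • (Ψ (p + 3 - i))ᵀ)
        = (∑ i ∈ Finset.range p, Ψ i * (((-1 : ℂ) ^ (p + 3 - i)) • (Ψ (p + 3 - i))ᵀ))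
          + ∑ i ∈ Finset.Ico p (p + 4), Ψ i * (((-1 : ℂ) ^ (p + 3 - i)) • (Ψ (p + 3 - i))ᵀ) := by
      simp only [Finset.range_eq_Ico]
      exact (Finset.sum_Ico_consecutive _ (Nat.zero_le p) (by omega)).symm
    rw [hsplit] at h0
    have part1 : ∑ i ∈ Finset.range p, Ψ i * (((-1 : ℂ) ^ (p + 3 - i)) • (Ψ (p + 3 - i))ᵀ)
        = ∑ j ∈ Finset.Ico 4 (p + 4), ((-1 : ℂ) ^ j) • (Ψ (p + 3 - j) * (Ψ j)ᵀ) := by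
      refine Finset.sum_nbij' (fun i => p + 3 - i) (fun j => p + 3 - j) ?_ ?_ ?_ ?_ ?_
      · intro a ha; simp only [Finset.mem_range] at ha; simp only [Finset.mem_Ico]; omega
      · intro a ha; simp only [Finset.mem_Ico] at ha; simp only [Finset.mem_range]; omega
      · intro a ha; simp only [Finset.mem_range] at ha
        show p + 3 - (p + 3 - a) = a; omega
      · intro a ha; simp only [Finset.mem_Ico] at ha
        show p + 3 - (p + 3 - a) = a; omega
      · intro a ha; simp only [Finset.mem_range] at ha
        show Ψ a * (((-1 : ℂ) ^ (p + 3 - a)) • (Ψ (p + 3 - a))ᵀ)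
          = ((-1 : ℂ) ^ (p + 3 - a)) • (Ψ (p + 3 - (p + 3 - a)) * (Ψ (p + 3 - a))ᵀ)
        rw [show p + 3 - (p + 3 - a) = a from by omega, mul_smul_comm]
    have part2 : ∑ i ∈ Finset.Ico p (p + 4), Ψ i * (((-1 : ℂ) ^ (p + 3 - i)) • (Ψ (p + 3 - i))ᵀ)
        = -∑ m ∈ Finset.range 4, ((-1 : ℂ) ^ m) • (Ψ (p + m) * (Ψ (3 - m))ᵀ) := by
      rw [Finset.sum_Ico_eq_sum_range]
      simp only [show p + 4 - p = 4 from by omega, Nat.add_sub_add_left]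
      simp only [Finset.sum_range_succ, Finset.sum_range_zero]
      norm_num [mul_smul_comm]
      abel
    rw [part1, part2] at h0
    -- h0 : RHS + (- LHS) = 0
    linear_combination (norm := abel) -h0
  -- assemble
  rw [hAct 0, hAct 1, hAct 2, hAct 3]
  have tA : ∑ m ∈ Finset.range 4, ((-1 : ℂ) ^ m) • (Ψ (l + m) * r * (Ψ (3 - m))ᵀ)
      = -∑ i ∈ Finset.range 4, ((-1 : ℂ) ^ i) • (Ψ (l + 3 - i) * r * (Ψ i)ᵀ) := by
    simp only [Finset.sum_range_succ, Finset.sum_range_zero,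
      show l + 3 - 1 = l + 2 from by omega, show l + 3 - 2 = l + 1 from by omega,
      show l + 3 - 3 = l from by omega, show l + 3 - 0 = l + 3 from by omega]
    norm_num
    abel
  have tB : ∑ m ∈ Finset.range 4, ((-1 : ℂ) ^ m) •
        ((∑ p ∈ Finset.Icc 1 l, E (l - p) * Ψ (p + m)) * (Ψ (3 - m))ᵀ)
      = ∑ j ∈ Finset.Ico 4 (l + 4), ((-1 : ℂ) ^ j) • (Ψ (l + 3 - j) * r * (Ψ j)ᵀ) := by
    have step1 : ∀ m ∈ Finset.range 4, ((-1 : ℂ) ^ m) •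
          ((∑ p ∈ Finset.Icc 1 l, E (l - p) * Ψ (p + m)) * (Ψ (3 - m))ᵀ)
        = ∑ p ∈ Finset.Icc 1 l, E (l - p) *
            (((-1 : ℂ) ^ m) • (Ψ (p + m) * (Ψ (3 - m))ᵀ)) := by
      intro m _
      rw [Finset.sum_mul, Finset.smul_sum]
      refine Finset.sum_congr rfl fun p _ => ?_
      rw [mul_smul_comm, mul_assoc]
    rw [Finset.sum_congr rfl step1, Finset.sum_comm]
    have step2 : ∀ p ∈ Finset.Icc 1 l,
        ∑ m ∈ Finset.range 4, E (l - p) * (((-1 : ℂ) ^ m) • (Ψ (p + m) * (Ψ (3 - m))ᵀ))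
          = ∑ j ∈ Finset.Ico 4 (p + 4), ((-1 : ℂ) ^ j) • (E (l - p) * (Ψ (p + 3 - j) * (Ψ j)ᵀ)) := by
      intro p hp
      simp only [Finset.mem_Icc] at hp
      rw [← Finset.mul_sum, hBp p hp.1, Finset.mul_sum]
      refine Finset.sum_congr rfl fun j _ => ?_
      rw [mul_smul_comm]
    rw [Finset.sum_congr rfl step2]
    rw [Finset.sum_comm' (t' := Finset.Ico 4 (l + 4)) (s' := fun j => Finset.Icc (j - 3) l)
      (by intro x y; simp only [Finset.mem_Icc, Finset.mem_Ico]; omega)]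
    refine Finset.sum_congr rfl fun j hj => ?_
    simp only [Finset.mem_Ico] at hj
    have inner : ∑ p ∈ Finset.Icc (j - 3) l, E (l - p) * Ψ (p + 3 - j)
        = Ψ (l + 3 - j) * r := by
      rw [← hK (l + 3 - j)]
      refine Finset.sum_nbij' (fun p => l - p) (fun k => l - k) ?_ ?_ ?_ ?_ ?_
      · intro a ha; simp only [Finset.mem_Icc] at ha; simp only [Finset.mem_range]; omega
      · intro a ha; simp only [Finset.mem_range] at ha; simp only [Finset.mem_Icc]; omega
      · intro a ha; simp only [Finset.mem_Icc] at ha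
        show l - (l - a) = a; omega
      · intro a ha; simp only [Finset.mem_range] at ha
        show l - (l - a) = a; omega
      · intro a ha; simp only [Finset.mem_Icc] at ha
        show E (l - a) * Ψ (a + 3 - j) = E (l - a) * Ψ (l + 3 - j - (l - a))
        rw [show l + 3 - j - (l - a) = a + 3 - j from by omega]
    calc ∑ p ∈ Finset.Icc (j - 3) l, ((-1 : ℂ) ^ j) • (E (l - p) * (Ψ (p + 3 - j) * (Ψ j)ᵀ))
        = ((-1 : ℂ) ^ j) • ((∑ p ∈ Finset.Icc (j - 3) l, E (l - p) * Ψ (p + 3 - j)) * (Ψ j)ᵀ) := by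
          rw [Finset.sum_mul, Finset.smul_sum]
          refine Finset.sum_congr rfl fun p _ => ?_
          rw [mul_assoc]
      _ = ((-1 : ℂ) ^ j) • (Ψ (l + 3 - j) * r * (Ψ j)ᵀ) := by rw [inner]
  have hsplitR : ∑ i ∈ Finset.range (l + 4), ((-1 : ℂ) ^ i) • (Ψ (l + 3 - i) * r * (Ψ i)ᵀ)
      = (∑ i ∈ Finset.range 4, ((-1 : ℂ) ^ i) • (Ψ (l + 3 - i) * r * (Ψ i)ᵀ))
        + ∑ i ∈ Finset.Ico 4 (l + 4), ((-1 : ℂ) ^ i) • (Ψ (l + 3 - i) * r * (Ψ i)ᵀ) := by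
    simp only [Finset.range_eq_Ico]
    exact (Finset.sum_Ico_consecutive _ (by omega) (by omega)).symm
  -- final computation
  have master : ∑ m ∈ Finset.range 4, ((-1 : ℂ) ^ m) •
        ((Ψ (l + m) * r - ∑ p ∈ Finset.Icc 1 l, E (l - p) * Ψ (p + m)) * (Ψ (3 - m))ᵀ)
      = -∑ i ∈ Finset.range (l + 4), ((-1 : ℂ) ^ i) • (Ψ (l + 3 - i) * r * (Ψ i)ᵀ) := by
    simp only [sub_mul, smul_sub, Finset.sum_sub_distrib]
    rw [tA, tB, hsplitR]
    abel
  rw [← master]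
  simp only [Finset.sum_range_succ, Finset.sum_range_zero]
  norm_num
  abel
end

section
/- Suppose matrices Ψ_k(ε) ∈ Mat_n depend differentiably on a parameter ε and satisfy Σ_{i+j=N} (−1)^j Ψ_i(ε) Ψ_j(ε)^t = δ_{N,0} Id for all N and all ε. Writing Ψ̇_k for dΨ_k/dε at ε = 0 and [M] for the sum of entries of M, one has [ (Ψ_0^t Ψ_3)˙ Ψ_0^t Ψ_0 − (Ψ_0^t Ψ_2)˙ Ψ_1^t Ψ_0 + (Ψ_0^t Ψ_1)˙ Ψ_2^t Ψ_0 − (Ψ_0^t Ψ_0)˙ Ψ_3^t Ψ_0 ] = [ Ψ_0^t Ψ̇_3 Ψ_0^t Ψ_0 − Ψ_0^t Ψ̇_2 Ψ_1^t Ψ_0 + Ψ_0^t Ψ̇_1 Ψ_2^t Ψ_0 − Ψ_0^t Ψ̇_0 Ψ_3^t Ψ_0 ], where (AB)˙ = ȦB + AḂ. -/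
open Matrix Finset

/-- Suppose matrices `Ψ_k(ε)` depend differentiably on `ε` and satisfy the orthogonality
relations `∑_{i+j=N} (-1)^j Ψ_i(ε) Ψ_j(ε)ᵗ = δ_{N,0} Id` for all `N` and `ε`.  Writing
`Ψ̇_k = D k` for the derivative at `ε = 0`, `P k = Ψ_k(0)`, and `[M] = ∑_{i,j} M_{ij}`, one
has
`[(Ψ₀ᵗΨ₃)˙Ψ₀ᵗΨ₀ - (Ψ₀ᵗΨ₂)˙Ψ₁ᵗΨ₀ + (Ψ₀ᵗΨ₁)˙Ψ₂ᵗΨ₀ - (Ψ₀ᵗΨ₀)˙Ψ₃ᵗΨ₀]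
  = [Ψ₀ᵗΨ̇₃Ψ₀ᵗΨ₀ - Ψ₀ᵗΨ̇₂Ψ₁ᵗΨ₀ + Ψ₀ᵗΨ̇₁Ψ₂ᵗΨ₀ - Ψ₀ᵗΨ̇₀Ψ₃ᵗΨ₀]`,
where `(Ψ₀ᵗΨ_k)˙ = Ψ̇₀ᵗΨ_k + Ψ₀ᵗΨ̇_k`. -/
theorem frozen_derivative_identity (n : ℕ)
    (Ψ : ℕ → ℝ → Matrix (Fin n) (Fin n) ℝ) (D : ℕ → Matrix (Fin n) (Fin n) ℝ)
    (hdiff : ∀ k (i j : Fin n), HasDerivAt (fun ε => Ψ k ε i j) (D k i j) 0)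
    (horth : ∀ (ε : ℝ) (N : ℕ),
      ∑ p ∈ Finset.HasAntidiagonal.antidiagonal N, ((-1 : ℝ) ^ p.2) • (Ψ p.1 ε * (Ψ p.2 ε)ᵀ) =
        if N = 0 then 1 else 0) :
    (∑ i, ∑ j,
        ((((D 0)ᵀ * Ψ 3 0 + (Ψ 0 0)ᵀ * D 3) * (Ψ 0 0)ᵀ * Ψ 0 0)
          - (((D 0)ᵀ * Ψ 2 0 + (Ψ 0 0)ᵀ * D 2) * (Ψ 1 0)ᵀ * Ψ 0 0)
          + (((D 0)ᵀ * Ψ 1 0 + (Ψ 0 0)ᵀ * D 1) * (Ψ 2 0)ᵀ * Ψ 0 0)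
          - (((D 0)ᵀ * Ψ 0 0 + (Ψ 0 0)ᵀ * D 0) * (Ψ 3 0)ᵀ * Ψ 0 0)) i j) =
      ∑ i, ∑ j,
        (((Ψ 0 0)ᵀ * D 3 * (Ψ 0 0)ᵀ * Ψ 0 0
          - (Ψ 0 0)ᵀ * D 2 * (Ψ 1 0)ᵀ * Ψ 0 0
          + (Ψ 0 0)ᵀ * D 1 * (Ψ 2 0)ᵀ * Ψ 0 0
          - (Ψ 0 0)ᵀ * D 0 * (Ψ 3 0)ᵀ * Ψ 0 0) i j) := by
  have hA : Ψ 3 0 * (Ψ 0 0)ᵀ - Ψ 2 0 * (Ψ 1 0)ᵀ + Ψ 1 0 * (Ψ 2 0)ᵀ - Ψ 0 0 * (Ψ 3 0)ᵀ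
      = 0 := by
    have h := horth 0 3
    rw [show (3 : ℕ) = 2 + 1 by rfl, Finset.Nat.sum_antidiagonal_eq_sum_range_succ_mk] at h
    simp [Finset.sum_range_succ, pow_succ] at h
    linear_combination (norm := (push_cast; noncomm_ring)) h
  have key : (((D 0)ᵀ * Ψ 3 0 + (Ψ 0 0)ᵀ * D 3) * (Ψ 0 0)ᵀ * Ψ 0 0)
          - (((D 0)ᵀ * Ψ 2 0 + (Ψ 0 0)ᵀ * D 2) * (Ψ 1 0)ᵀ * Ψ 0 0)
          + (((D 0)ᵀ * Ψ 1 0 + (Ψ 0 0)ᵀ * D 1) * (Ψ 2 0)ᵀ * Ψ 0 0)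
          - (((D 0)ᵀ * Ψ 0 0 + (Ψ 0 0)ᵀ * D 0) * (Ψ 3 0)ᵀ * Ψ 0 0)
      = (Ψ 0 0)ᵀ * D 3 * (Ψ 0 0)ᵀ * Ψ 0 0
          - (Ψ 0 0)ᵀ * D 2 * (Ψ 1 0)ᵀ * Ψ 0 0
          + (Ψ 0 0)ᵀ * D 1 * (Ψ 2 0)ᵀ * Ψ 0 0
          - (Ψ 0 0)ᵀ * D 0 * (Ψ 3 0)ᵀ * Ψ 0 0 := by
    rw [← sub_eq_zero]
    have h2 : (((D 0)ᵀ * Ψ 3 0 + (Ψ 0 0)ᵀ * D 3) * (Ψ 0 0)ᵀ * Ψ 0 0)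
          - (((D 0)ᵀ * Ψ 2 0 + (Ψ 0 0)ᵀ * D 2) * (Ψ 1 0)ᵀ * Ψ 0 0)
          + (((D 0)ᵀ * Ψ 1 0 + (Ψ 0 0)ᵀ * D 1) * (Ψ 2 0)ᵀ * Ψ 0 0)
          - (((D 0)ᵀ * Ψ 0 0 + (Ψ 0 0)ᵀ * D 0) * (Ψ 3 0)ᵀ * Ψ 0 0)
        - ((Ψ 0 0)ᵀ * D 3 * (Ψ 0 0)ᵀ * Ψ 0 0
          - (Ψ 0 0)ᵀ * D 2 * (Ψ 1 0)ᵀ * Ψ 0 0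
          + (Ψ 0 0)ᵀ * D 1 * (Ψ 2 0)ᵀ * Ψ 0 0
          - (Ψ 0 0)ᵀ * D 0 * (Ψ 3 0)ᵀ * Ψ 0 0)
        = (D 0)ᵀ * (Ψ 3 0 * (Ψ 0 0)ᵀ - Ψ 2 0 * (Ψ 1 0)ᵀ + Ψ 1 0 * (Ψ 2 0)ᵀ
            - Ψ 0 0 * (Ψ 3 0)ᵀ) * Ψ 0 0 := by
      noncomm_ring
    rw [h2, hA]
    simp
  rw [key]
end
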